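/- Let X be a compact metric space containing a free interval (an open set homeomorphic to (0,1)). If f : X → X is continuous and weakly mixing, then f is topologically mixing. -/

import Mathlib

/-- `f` is topologically transitive. -/
def TopTransitive {X : Type*} [TopologicalSpace X] (f : X → X) : Prop :=
  ∀ U V : Set X, IsOpen U → IsOpen V → U.Nonempty → V.Nonempty →
    ∃ k : ℕ, (f^[k] '' U ∩ V).Nonempty

/-- `f` is topologically mixing. -/
def TopMixing {X : Type*} [TopologicalSpace X] (f : X → X) : Prop :=
  ∀ U V : Set X, IsOpen U → IsOpen V → U.Nonempty → V.Nonempty →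
    ∃ N : ℕ, ∀ n ≥ N, (f^[n] '' U ∩ V).Nonempty

/-- `X` contains a free interval: an open subset homeomorphic to `(0,1) ⊆ ℝ`. -/
def HasFreeInterval (X : Type*) [TopologicalSpace X] : Prop :=
  ∃ J : Set X, IsOpen J ∧ Nonempty (J ≃ₜ Set.Ioo (0 : ℝ) 1)

/-- `f` is weakly mixing: `f × f` is transitive. -/
def WeaklyMixing {X : Type*} [TopologicalSpace X] (f : X → X) : Prop :=
  TopTransitive (fun p : X × X => (f p.1, f p.2))

set_option linter.unusedSectionVars false
set_option linter.unusedVariables false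
set_option maxHeartbeats 1000000

open Set Function

namespace Wm

variable {X : Type*} [TopologicalSpace X] {f : X → X}

/-- hitting times set -/
def NN (f : X → X) (U V : Set X) : Set ℕ := {n | (f^[n] '' U ∩ V).Nonempty}

lemma pair_trans (hwm : WeaklyMixing f) {U1 V1 U2 V2 : Set X}
    (hU1 : IsOpen U1) (hV1 : IsOpen V1) (hU2 : IsOpen U2) (hV2 : IsOpen V2)
    (hU1n : U1.Nonempty) (hV1n : V1.Nonempty) (hU2n : U2.Nonempty) (hV2n : V2.Nonempty) :
    ∃ k, k ∈ NN f U1 V1 ∧ k ∈ NN f U2 V2 := by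
  obtain ⟨k, p, hp1, hp2⟩ := hwm (U1 ×ˢ U2) (V1 ×ˢ V2) (hU1.prod hU2) (hV1.prod hV2)
    (hU1n.prod hU2n) (hV1n.prod hV2n)
  obtain ⟨q, hq, rfl⟩ := hp1
  have hq' : (fun p : X × X => (f p.1, f p.2))^[k] q = (f^[k] q.1, f^[k] q.2) := by
    have : (fun p : X × X => (f p.1, f p.2)) = Prod.map f f := rfl
    rw [this, Prod.map_iterate]; rfl
  rw [hq'] at hp2
  exact ⟨k, ⟨f^[k] q.1, ⟨⟨q.1, hq.1, rfl⟩, hp2.1⟩⟩, ⟨f^[k] q.2, ⟨⟨q.2, hq.2, rfl⟩, hp2.2⟩⟩⟩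

lemma nn_nonempty (hwm : WeaklyMixing f) {U V : Set X} (hU : IsOpen U) (hV : IsOpen V)
    (hUn : U.Nonempty) (hVn : V.Nonempty) : ∃ k, k ∈ NN f U V := by
  obtain ⟨k, h, -⟩ := pair_trans hwm hU hV hU hV hUn hVn hUn hVn
  exact ⟨k, h⟩

lemma filter_base (hf : Continuous f) (hwm : WeaklyMixing f) {U1 V1 U2 V2 : Set X}
    (hU1 : IsOpen U1) (hV1 : IsOpen V1) (hU2 : IsOpen U2) (hV2 : IsOpen V2)
    (hU1n : U1.Nonempty) (hV1n : V1.Nonempty) (hU2n : U2.Nonempty) (hV2n : V2.Nonempty) :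
    ∃ U3 V3 : Set X, IsOpen U3 ∧ IsOpen V3 ∧ U3.Nonempty ∧ V3.Nonempty ∧
      NN f U3 V3 ⊆ NN f U1 V1 ∩ NN f U2 V2 := by
  obtain ⟨k, hk1, hk2⟩ := pair_trans hwm hU1 hU2 hV1 hV2 hU1n hU2n hV1n hV2n
  refine ⟨U1 ∩ f^[k] ⁻¹' U2, V1 ∩ f^[k] ⁻¹' V2,
    hU1.inter ((hU2.preimage (hf.iterate k))),
    hV1.inter ((hV2.preimage (hf.iterate k))), ?_, ?_, ?_⟩
  · obtain ⟨y, ⟨x, hx, rfl⟩, hy⟩ := hk1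
    exact ⟨x, hx, hy⟩
  · obtain ⟨y, ⟨x, hx, rfl⟩, hy⟩ := hk2
    exact ⟨x, hx, hy⟩
  · rintro n ⟨y, ⟨x, ⟨hx1, hx2⟩, rfl⟩, hy1, hy2⟩
    constructor
    · exact ⟨f^[n] x, ⟨x, hx1, rfl⟩, hy1⟩
    · refine ⟨f^[n] (f^[k] x), ⟨f^[k] x, hx2, rfl⟩, ?_⟩
      have : f^[n] (f^[k] x) = f^[k] (f^[n] x) := by
        rw [← Function.iterate_add_apply, ← Function.iterate_add_apply, Nat.add_comm]
      rw [this]; exact hy2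

lemma master_pair [Nonempty X] (hf : Continuous f) (hwm : WeaklyMixing f) :
    ∀ l : List (Set X × Set X),
      (∀ p ∈ l, IsOpen p.1 ∧ IsOpen p.2 ∧ p.1.Nonempty ∧ p.2.Nonempty) →
      ∃ U V : Set X, IsOpen U ∧ IsOpen V ∧ U.Nonempty ∧ V.Nonempty ∧
        ∀ p ∈ l, NN f U V ⊆ NN f p.1 p.2 := by
  intro l
  induction l with
  | nil => exact fun _ => ⟨univ, univ, isOpen_univ, isOpen_univ, univ_nonempty, univ_nonempty,
      fun p hp => absurd hp List.not_mem_nil⟩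
  | cons a l ih =>
    intro hl
    obtain ⟨U2, V2, hU2, hV2, hU2n, hV2n, h2⟩ := ih fun p hp => hl p (List.mem_cons_of_mem a hp)
    obtain ⟨ha1, ha2, ha3, ha4⟩ := hl a List.mem_cons_self
    obtain ⟨U3, V3, h1, h2', h3, h4, h5⟩ := filter_base hf hwm ha1 ha2 hU2 hV2 ha3 ha4 hU2n hV2n
    refine ⟨U3, V3, h1, h2', h3, h4, ?_⟩
    rintro p hp
    rcases List.mem_cons.mp hp with rfl | hp'
    · exact fun n hn => (h5 hn).1
    · exact fun n hn => h2 p hp' ((h5 hn).2)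

lemma list_trans [Nonempty X] (hf : Continuous f) (hwm : WeaklyMixing f)
    (l : List (Set X × Set X))
    (hl : ∀ p ∈ l, IsOpen p.1 ∧ IsOpen p.2 ∧ p.1.Nonempty ∧ p.2.Nonempty) :
    ∃ n, ∀ p ∈ l, n ∈ NN f p.1 p.2 := by
  obtain ⟨U, V, hU, hV, hUn, hVn, h⟩ := master_pair hf hwm l hl
  obtain ⟨n, hn⟩ := nn_nonempty hwm hU hV hUn hVn
  exact ⟨n, fun p hp => h p hp hn⟩


section Geometry
variable {X : Type*} [TopologicalSpace X] [T2Space X]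

variable {X : Type*} [TopologicalSpace X] [T2Space X]
variable (ι : ↥(Set.Ioo (0:ℝ) 1) → X)

def arcO (a b : ℝ) : Set X := ι '' {p | (p : ℝ) ∈ Ioo a b}
def arcC (a b : ℝ) : Set X := ι '' {p | (p : ℝ) ∈ Icc a b}

variable {ι}

lemma isOpen_arcO (ho : IsOpenMap ι) (a b : ℝ) : IsOpen (arcO ι a b) :=
  ho _ (isOpen_Ioo.preimage continuous_subtype_val)

lemma arcO_nonempty {a b : ℝ} (h0 : 0 ≤ a) (h1 : b ≤ 1) (hab : a < b) :
    (arcO ι a b).Nonempty := by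
  have hm : (a + b) / 2 ∈ Ioo a b := ⟨by linarith, by linarith⟩
  have hm' : (a + b) / 2 ∈ Ioo (0:ℝ) 1 := ⟨by linarith [hm.1], by linarith [hm.2]⟩
  exact ⟨ι ⟨_, hm'⟩, ⟨_, hm, rfl⟩⟩

lemma arcO_subset_arcC (a b : ℝ) : arcO ι a b ⊆ arcC ι a b :=
  image_mono fun _ hp => Ioo_subset_Icc_self hp

lemma arcC_mono {a b a' b' : ℝ} (h1 : a' ≤ a) (h2 : b ≤ b') :
    arcC ι a b ⊆ arcC ι a' b' :=
  image_mono fun _ hp => ⟨le_trans h1 hp.1, le_trans hp.2 h2⟩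

lemma arc_disjoint (hi : Function.Injective ι) {a b c d : ℝ} (h : b ≤ c) :
    arcO ι a b ∩ arcO ι c d = ∅ := by
  simp only [arcO]
  rw [← image_inter hi]
  have : {p : ↥(Ioo (0:ℝ) 1) | (p:ℝ) ∈ Ioo a b} ∩ {p | (p:ℝ) ∈ Ioo c d} = ∅ := by
    ext p; simp only [mem_inter_iff, mem_setOf_eq, mem_empty_iff_false, iff_false]
    rintro ⟨h1, h2⟩; exact absurd (lt_of_lt_of_le h1.2 h) (not_lt.mpr (le_of_lt h2.1))
  rw [this, image_empty]

lemma arcC_eq_range (hsub : Icc a b ⊆ Ioo (0:ℝ) 1) :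
    arcC ι a b = Set.range (fun t : ↥(Icc a b) => ι ⟨(t : ℝ), hsub t.2⟩) := by
  ext x; constructor
  · rintro ⟨p, hp, rfl⟩; exact ⟨⟨(p : ℝ), hp⟩, congrArg ι (Subtype.ext rfl)⟩
  · rintro ⟨t, rfl⟩; exact ⟨⟨(t : ℝ), hsub t.2⟩, t.2, rfl⟩

lemma isCompact_arcC (hc : Continuous ι) {a b : ℝ} (hsub : Icc a b ⊆ Ioo (0:ℝ) 1) :
    IsCompact (arcC ι a b) := by
  rw [arcC_eq_range hsub]
  exact isCompact_range (hc.comp (Continuous.subtype_mk continuous_subtype_val _))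

lemma isPreconnected_arcC (hc : Continuous ι) {a b : ℝ} (hsub : Icc a b ⊆ Ioo (0:ℝ) 1) :
    IsPreconnected (arcC ι a b) := by
  rw [arcC_eq_range hsub]
  haveI := Subtype.preconnectedSpace (isPreconnected_Icc (a := a) (b := b))
  exact isPreconnected_range (hc.comp (Continuous.subtype_mk continuous_subtype_val _))

lemma arcC_subset_closure_arcO (hc : Continuous ι) {a b : ℝ} (hab : a < b) :
    arcC ι a b ⊆ closure (arcO ι a b) := by
  rintro x ⟨p, hp, rfl⟩
  rw [mem_closure_iff]
  intro O hO hxO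
  have hQ : IsOpen (Subtype.val '' (ι ⁻¹' O) : Set ℝ) :=
    isOpen_Ioo.isOpenMap_subtype_val _ (hO.preimage hc)
  have hpQ : (p : ℝ) ∈ Subtype.val '' (ι ⁻¹' O) := ⟨p, hxO, rfl⟩
  have hcl : (p : ℝ) ∈ closure (Ioo a b) := by
    rw [closure_Ioo hab.ne]; exact hp
  rw [mem_closure_iff] at hcl
  obtain ⟨t, ⟨q, hqO, rfl⟩, htab⟩ := hcl _ hQ hpQ
  exact ⟨ι q, hqO, ⟨q, htab, rfl⟩⟩

/-- Trap lemma: a preconnected set meeting the open arc and missing both endpoints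
is contained in the open arc. -/
lemma trap (hc : Continuous ι) (hi : Function.Injective ι)
    {C : Set X} (hC : IsPreconnected C) {a b : ℝ}
    (ha : a ∈ Ioo (0:ℝ) 1) (hb : b ∈ Ioo (0:ℝ) 1) (hab : a < b)
    (ho : IsOpenMap ι)
    (hmeet : (C ∩ arcO ι a b).Nonempty)
    (hea : ι ⟨a, ha⟩ ∉ C) (heb : ι ⟨b, hb⟩ ∉ C) :
    C ⊆ arcO ι a b := by
  have hsub : Icc a b ⊆ Ioo (0:ℝ) 1 := fun t ht => ⟨lt_of_lt_of_le ha.1 ht.1, lt_of_le_of_lt ht.2 hb.2⟩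
  have hclosed : IsClosed (arcC ι a b) := (isCompact_arcC hc hsub).isClosed
  set O1 := arcO ι a b with hO1
  set O2 := (arcC ι a b)ᶜ with hO2
  have hcover : C ⊆ O1 ∪ O2 := by
    intro x hx
    by_cases hxc : x ∈ arcC ι a b
    · obtain ⟨p, hp, rfl⟩ := hxc
      rcases eq_or_lt_of_le hp.1 with heq | hlt
      · rw [show p = ⟨a, ha⟩ from Subtype.ext heq.symm] at hx
        exact absurd hx hea
      rcases eq_or_lt_of_le hp.2 with heq | hlt2
      · rw [show p = ⟨b, hb⟩ from Subtype.ext heq] at hx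
        exact absurd hx heb
      · exact Or.inl ⟨p, ⟨hlt, hlt2⟩, rfl⟩
    · exact Or.inr hxc
  have hdisj : C ∩ (O1 ∩ O2) = ∅ := by
    rw [eq_empty_iff_forall_notMem]
    rintro x ⟨-, hx1, hx2⟩
    exact hx2 (arcO_subset_arcC _ _ hx1)
  by_contra hnot
  have hCO2 : (C ∩ O2).Nonempty := by
    rw [not_subset] at hnot
    obtain ⟨x, hxC, hxO1⟩ := hnot
    rcases hcover hxC with h | h
    · exact absurd h hxO1
    · exact ⟨x, hxC, h⟩
  obtain ⟨x, hx⟩ := hC O1 O2 (isOpen_arcO ho a b) hclosed.isOpen_compl hcover hmeet hCO2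
  rw [eq_empty_iff_forall_notMem] at hdisj
  exact hdisj x hx

/-- Inside lemma : a preconnected subset of the image of ι containing two marked points
contains the closed arc between them. -/
lemma inside (hc : Continuous ι) (hi : Function.Injective ι) (ho : IsOpenMap ι)
    {C : Set X} (hC : IsPreconnected C) (hCsub : C ⊆ Set.range ι)
    {p1 p2 : ↥(Ioo (0:ℝ) 1)} (h1 : ι p1 ∈ C) (h2 : ι p2 ∈ C) :
    arcC ι (p1 : ℝ) (p2 : ℝ) ⊆ C := by
  have hT : IsPreconnected (ι ⁻¹' C) := hC.preimage_of_isOpenMap hi ho hCsub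
  have hT' : IsPreconnected (Subtype.val '' (ι ⁻¹' C) : Set ℝ) :=
    hT.image _ continuous_subtype_val.continuousOn
  have hIcc : Icc (p1 : ℝ) (p2 : ℝ) ⊆ Subtype.val '' (ι ⁻¹' C) :=
    hT'.Icc_subset ⟨p1, h1, rfl⟩ ⟨p2, h2, rfl⟩
  rintro x ⟨q, hq, rfl⟩
  obtain ⟨q', hq', hval⟩ := hIcc hq
  rwa [show q = q' from Subtype.ext hval.symm]



/-- combined trap+inside -/
lemma dpp (hc : Continuous ι) (hi : Function.Injective ι) (ho : IsOpenMap ι)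
    {C : Set X} (hC : IsPreconnected C) {u v : ℝ} {p1 p2 : ↥(Ioo (0:ℝ) 1)}
    (hu : u ∈ Ioo (0:ℝ) 1) (hv : v ∈ Ioo (0:ℝ) 1)
    (hup : u < (p1 : ℝ)) (hpp : (p1 : ℝ) ≤ (p2 : ℝ)) (hpv : (p2 : ℝ) < v)
    (h1 : ι p1 ∈ C) (h2 : ι p2 ∈ C)
    (hnu : ι ⟨u, hu⟩ ∉ C) (hnv : ι ⟨v, hv⟩ ∉ C) :
    arcC ι (p1 : ℝ) (p2 : ℝ) ⊆ C := by
  have hCsub : C ⊆ arcO ι u v := by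
    apply trap hc hi hC hu hv (lt_of_lt_of_le hup (le_trans hpp (le_of_lt hpv))) ho
      ⟨ι p1, h1, ⟨p1, ⟨hup, lt_of_le_of_lt hpp hpv⟩, rfl⟩⟩ hnu hnv
  exact inside hc hi ho hC (hCsub.trans (image_subset_range _ _)) h1 h2

variable (ι) in
def WL : Set X := arcO ι (7/20) (2/5)
variable (ι) in
def WR : Set X := arcO ι (3/5) (13/20)
variable (ι) in
def Bc : Fin 3 → Set X := fun i =>
  match i with
  | 0 => arcC ι (31/100) (34/100)
  | 1 => arcC ι (2/5) (3/5)
  | 2 => arcC ι (66/100) (69/100)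
variable (ι) in
def Bo : Fin 3 → Set X := fun i =>
  match i with
  | 0 => arcO ι (31/100) (34/100)
  | 1 => arcO ι (2/5) (3/5)
  | 2 => arcO ι (66/100) (69/100)

lemma star_lemma (hc : Continuous ι) (hi : Function.Injective ι) (ho : IsOpenMap ι)
    {C : Set X} (hC : IsPreconnected C)
    (hL : (C ∩ WL ι).Nonempty) (hR : (C ∩ WR ι).Nonempty) :
    ∃ i, Bc ι i ⊆ C := by
  obtain ⟨x, hxC, p, hp, rfl⟩ := hL
  obtain ⟨y, hyC, q, hq, rfl⟩ := hR
  simp only [mem_setOf_eq] at hp hq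
  by_cases hB2 : arcC ι (2/5) (3/5) ⊆ C
  · exact ⟨1, hB2⟩
  have key : ∀ u : ℝ, ∀ hu01 : u ∈ Ioo (0:ℝ) 1, u ∈ Ioo (3/10) (p:ℝ) →
      ∀ v : ℝ, ∀ hv01 : v ∈ Ioo (0:ℝ) 1, v ∈ Ioo (q:ℝ) (7/10) →
      ι ⟨u, hu01⟩ ∈ C ∨ ι ⟨v, hv01⟩ ∈ C := by
    intro u hu01 huI v hv01 hvI
    by_contra hcon
    push_neg at hcon
    apply hB2
    have hsub : arcC ι (p:ℝ) (q:ℝ) ⊆ C :=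
      dpp hc hi ho hC hu01 hv01 huI.2 (by linarith [hp.2, hq.1] : (p:ℝ) ≤ (q:ℝ)) hvI.1
        hxC hyC hcon.1 hcon.2
    exact Set.Subset.trans (arcC_mono (a := 2/5) (b := 3/5) (a' := (p:ℝ)) (b' := (q:ℝ)) (le_of_lt hp.2) (le_of_lt hq.1)) hsub
  by_cases hex : ∃ u : ℝ, ∃ hu01 : u ∈ Ioo (0:ℝ) 1, u ∈ Ioo (3/10) (p:ℝ) ∧ ι ⟨u, hu01⟩ ∉ C
  · refine ⟨2, ?_⟩
    rintro z ⟨r, hr, rfl⟩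
    simp only [mem_setOf_eq] at hr
    obtain ⟨u, hu01, huI, hnu⟩ := hex
    have hrI : (r : ℝ) ∈ Ioo (q:ℝ) (7/10) :=
      ⟨lt_of_lt_of_le hq.2 (by linarith [hr.1]), by linarith [hr.2]⟩
    rcases key u hu01 huI (r : ℝ) r.2 hrI with h | h
    · exact absurd h hnu
    · exact h
  · push_neg at hex
    refine ⟨0, ?_⟩
    rintro z ⟨r, hr, rfl⟩
    simp only [mem_setOf_eq] at hr
    have hrI : (r : ℝ) ∈ Ioo (3/10) (p:ℝ) :=
      ⟨by linarith [hr.1], lt_of_le_of_lt (by linarith [hr.2]) hp.1⟩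
    exact hex (r : ℝ) r.2 hrI


end Geometry
section ArcFacts
variable {X : Type*} [TopologicalSpace X] [T2Space X] {ι : ↥(Set.Ioo (0:ℝ) 1) → X}

lemma Bo_open (ho : IsOpenMap ι) (i : Fin 3) : IsOpen (Bo ι i) := by
  fin_cases i <;> exact isOpen_arcO ho _ _

lemma Bo_ne (i : Fin 3) : (Bo ι i).Nonempty := by
  fin_cases i <;> exact arcO_nonempty (by norm_num) (by norm_num) (by norm_num)

lemma Bo_sub (i : Fin 3) : Bo ι i ⊆ Bc ι i := by
  fin_cases i <;> exact arcO_subset_arcC _ _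

lemma Bc_compact (hc : Continuous ι) (i : Fin 3) : IsCompact (Bc ι i) := by
  fin_cases i <;>
    exact isCompact_arcC hc (fun t ht => ⟨by linarith [ht.1], by linarith [ht.2]⟩)

lemma Bc_preconn (hc : Continuous ι) (i : Fin 3) : IsPreconnected (Bc ι i) := by
  fin_cases i <;>
    exact isPreconnected_arcC hc (fun t ht => ⟨by linarith [ht.1], by linarith [ht.2]⟩)

lemma Bc_sub_closure (hc : Continuous ι) (i : Fin 3) : Bc ι i ⊆ closure (Bo ι i) := by
  fin_cases i <;> exact arcC_subset_closure_arcO hc (by norm_num)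

lemma Bo_disj (hi : Function.Injective ι) (i : Fin 3) :
    Bo ι i ∩ WL ι = ∅ ∨ Bo ι i ∩ WR ι = ∅ := by
  fin_cases i
  · exact Or.inr (arc_disjoint hi (by norm_num))
  · exact Or.inr (arc_disjoint hi (by norm_num))
  · left; rw [Set.inter_comm]; exact arc_disjoint hi (by norm_num)

lemma WL_open (ho : IsOpenMap ι) : IsOpen (WL ι) := isOpen_arcO ho _ _
lemma WR_open (ho : IsOpenMap ι) : IsOpen (WR ι) := isOpen_arcO ho _ _
lemma WL_ne : (WL ι).Nonempty := arcO_nonempty (by norm_num) (by norm_num) (by norm_num)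
lemma WR_ne : (WR ι).Nonempty := arcO_nonempty (by norm_num) (by norm_num) (by norm_num)
lemma WLR_disj (hi : Function.Injective ι) : WL ι ∩ WR ι = ∅ :=
  arc_disjoint hi (by norm_num)

end ArcFacts

section Dynamics
variable {X : Type*} [TopologicalSpace X] [T2Space X] [CompactSpace X]
variable {f : X → X} {ι : ↥(Set.Ioo (0:ℝ) 1) → X}

lemma sigma_step (hf : Continuous f) (hwm : WeaklyMixing f)
    (hc : Continuous ι) (hi : Function.Injective ι) (ho : IsOpenMap ι) (i : Fin 3) :
    ∃ m j, 1 ≤ m ∧ Bc ι j ⊆ f^[m] '' (Bc ι i) := by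
  haveI : Nonempty X := ⟨ι ⟨1/2, by norm_num⟩⟩
  obtain ⟨n, hn⟩ := list_trans hf hwm [(Bo ι i, WL ι), (Bo ι i, WR ι)] (by
    rintro p hp
    rcases List.mem_pair.mp hp with rfl | rfl
    · exact ⟨Bo_open ho i, WL_open ho, Bo_ne i, WL_ne⟩
    · exact ⟨Bo_open ho i, WR_open ho, Bo_ne i, WR_ne⟩)
  have h1 : n ∈ NN f (Bo ι i) (WL ι) := hn (Bo ι i, WL ι) (by simp)
  have h2 : n ∈ NN f (Bo ι i) (WR ι) := hn (Bo ι i, WR ι) (by simp)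
  have hn1 : 1 ≤ n := by
    rcases Nat.eq_zero_or_pos n with rfl | h
    · exfalso
      simp only [NN, Function.iterate_zero, Set.image_id, Set.mem_setOf_eq] at h1 h2
      rcases Bo_disj hi i with hd | hd
      · rw [hd] at h1; exact Set.not_nonempty_empty h1
      · rw [hd] at h2; exact Set.not_nonempty_empty h2
    · exact h
  have hpre : IsPreconnected (f^[n] '' Bc ι i) :=
    (Bc_preconn hc i).image _ ((hf.iterate n).continuousOn)
  have hL : ((f^[n] '' Bc ι i) ∩ WL ι).Nonempty := by
    obtain ⟨y, ⟨x, hx, rfl⟩, hyW⟩ := h1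
    exact ⟨f^[n] x, ⟨x, Bo_sub i hx, rfl⟩, hyW⟩
  have hR : ((f^[n] '' Bc ι i) ∩ WR ι).Nonempty := by
    obtain ⟨y, ⟨x, hx, rfl⟩, hyW⟩ := h2
    exact ⟨f^[n] x, ⟨x, Bo_sub i hx, rfl⟩, hyW⟩
  obtain ⟨j, hj⟩ := star_lemma hc hi ho hpre hL hR
  exact ⟨n, j, hn1, hj⟩

lemma reach {σ : Fin 3 → Fin 3} {mf : Fin 3 → ℕ}
    (hσ : ∀ i, 1 ≤ mf i ∧ Bc ι (σ i) ⊆ f^[mf i] '' Bc ι i) :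
    ∀ (k : ℕ) (i : Fin 3), ∃ M, k ≤ M ∧ Bc ι (σ^[k] i) ⊆ f^[M] '' Bc ι i := by
  intro k
  induction k with
  | zero => exact fun i => ⟨0, le_refl 0, by simp⟩
  | succ k ih =>
    intro i
    obtain ⟨M, hkM, hsub⟩ := ih i
    refine ⟨mf (σ^[k] i) + M, by have := (hσ (σ^[k] i)).1; omega, ?_⟩
    rw [Function.iterate_succ_apply' σ]
    calc Bc ι (σ (σ^[k] i)) ⊆ f^[mf (σ^[k] i)] '' Bc ι (σ^[k] i) := (hσ _).2
    _ ⊆ f^[mf (σ^[k] i)] '' (f^[M] '' Bc ι i) := Set.image_mono hsub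
    _ = f^[mf (σ^[k] i) + M] '' Bc ι i := by
        rw [Function.iterate_add f, Set.image_comp]

lemma periodic (σ : Fin 3 → Fin 3) (j : Fin 3) :
    ∃ a k, 1 ≤ k ∧ σ^[k] (σ^[a] j) = σ^[a] j := by
  have hcard : Fintype.card (Fin 3) < Fintype.card (Fin 4) := by simp
  obtain ⟨x, y, hxy, hg⟩ :=
    Fintype.exists_ne_map_eq_of_card_lt (fun t : Fin 4 => σ^[(t : ℕ)] j) hcard
  rcases Ne.lt_or_gt hxy with hlt | hlt
  · refine ⟨(x : ℕ), (y : ℕ) - (x : ℕ), by omega, ?_⟩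
    rw [← Function.iterate_add_apply, Nat.sub_add_cancel (le_of_lt hlt)]
    exact hg.symm
  · refine ⟨(y : ℕ), (x : ℕ) - (y : ℕ), by omega, ?_⟩
    rw [← Function.iterate_add_apply, Nat.sub_add_cancel (le_of_lt hlt)]
    exact hg

lemma surj_of_wm (hf : Continuous f) (hwm : WeaklyMixing f)
    (hi : Function.Injective ι) (ho : IsOpenMap ι) : Function.Surjective f := by
  haveI : Nonempty X := ⟨ι ⟨1/2, by norm_num⟩⟩
  by_contra hs
  have hy : ∃ y, y ∉ Set.range f := by
    by_contra h; push_neg at h; exact hs fun y => h y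
  obtain ⟨y, hy⟩ := hy
  have hro : IsOpen (Set.range f)ᶜ := (isCompact_range hf).isClosed.isOpen_compl
  obtain ⟨n, hn⟩ := list_trans hf hwm [((Set.range f)ᶜ, (Set.range f)ᶜ), (WL ι, WR ι)] (by
    rintro p hp
    rcases List.mem_pair.mp hp with rfl | rfl
    · exact ⟨hro, hro, ⟨y, hy⟩, ⟨y, hy⟩⟩
    · exact ⟨WL_open ho, WR_open ho, WL_ne, WR_ne⟩)
  have h1 : n ∈ NN f (Set.range f)ᶜ (Set.range f)ᶜ := hn ((Set.range f)ᶜ, (Set.range f)ᶜ) (by simp)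
  have h2 : n ∈ NN f (WL ι) (WR ι) := hn (WL ι, WR ι) (by simp)
  have hn1 : 1 ≤ n := by
    rcases Nat.eq_zero_or_pos n with rfl | h
    · exfalso
      simp only [NN, Function.iterate_zero, Set.image_id, Set.mem_setOf_eq] at h2
      rw [WLR_disj hi] at h2; exact Set.not_nonempty_empty h2
    · exact h
  obtain ⟨z, ⟨x, hx, rfl⟩, hz⟩ := h1
  apply hz
  obtain ⟨n', rfl⟩ := Nat.exists_eq_add_of_le hn1
  rw [Nat.add_comm, Function.iterate_succ_apply']
  exact ⟨f^[n'] x, rfl⟩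

lemma mult_hit (hf : Continuous f) (hwm : WeaklyMixing f) (hs : Function.Surjective f)
    [Nonempty X] {m : ℕ} (hm : 1 ≤ m) {U V : Set X} (hU : IsOpen U) (hV : IsOpen V)
    (hUne : U.Nonempty) (hVne : V.Nonempty) :
    ∃ k, (f^[k * m] '' U ∩ V).Nonempty := by
  obtain ⟨n, hn⟩ := list_trans hf hwm ((List.range m).map fun j => (U, f^[j] ⁻¹' V)) (by
    rintro p hp
    obtain ⟨j, hj, rfl⟩ := List.mem_map.mp hp
    refine ⟨hU, hV.preimage (hf.iterate j), hUne, ?_⟩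
    obtain ⟨v, hv⟩ := hVne
    obtain ⟨x, hx⟩ := (hs.iterate j) v
    exact ⟨x, by simp [Set.mem_preimage, hx, hv]⟩)
  set r := n % m with hrdef
  have hrm : r < m := Nat.mod_lt _ hm
  set j := if r = 0 then 0 else m - r with hjdef
  have hjm : j < m := by
    by_cases h : r = 0 <;> simp [hjdef, h] <;> omega
  have hdvd : m ∣ n + j := by
    by_cases h : r = 0
    · simp only [hjdef, if_pos h, Nat.add_zero]
      exact Nat.dvd_of_mod_eq_zero h
    · have h1 : (m - r) % m = m - r := Nat.mod_eq_of_lt (by omega)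
      have h0 : (n + (m - r)) % m = 0 := by
        rw [Nat.add_mod, h1, ← hrdef]
        have : r + (m - r) = m := by omega
        rw [this, Nat.mod_self]
      simp only [hjdef, if_neg h]
      exact Nat.dvd_of_mod_eq_zero h0
  have hmem : (U, f^[j] ⁻¹' V) ∈ (List.range m).map fun j => (U, f^[j] ⁻¹' V) :=
    List.mem_map.mpr ⟨j, List.mem_range.mpr hjm, rfl⟩
  obtain ⟨z, ⟨x, hxU, rfl⟩, hzV⟩ := hn _ hmem
  refine ⟨(n + j) / m, ⟨f^[(n + j) / m * m] x, ⟨x, hxU, rfl⟩, ?_⟩⟩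
  rw [Nat.div_mul_cancel hdvd, Nat.add_comm, Function.iterate_add_apply]
  exact hzV

lemma density (hf : Continuous f) (hwm : WeaklyMixing f) (hs : Function.Surjective f)
    [Nonempty X] {S B : Set X} (hS : IsOpen S) (hSne : S.Nonempty) (hSB : S ⊆ B)
    (hBcl : B ⊆ closure S) {m : ℕ} (hm : 1 ≤ m) (hcov : B ⊆ f^[m] '' B)
    {V : Set X} (hV : IsOpen V) (hVne : V.Nonempty) :
    ∃ k0, ∀ k ≥ k0, (f^[k * m] '' S ∩ V).Nonempty := by
  have hstep : ∀ k, f^[k * m] '' B ⊆ f^[(k + 1) * m] '' B := by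
    intro k
    have : (k + 1) * m = k * m + m := by ring
    rw [this, Function.iterate_add f, Set.image_comp]
    exact (Set.image_mono hcov).trans (le_refl _)
  have hmono : ∀ k1 k2, k1 ≤ k2 → f^[k1 * m] '' B ⊆ f^[k2 * m] '' B := by
    intro k1 k2 h
    induction k2 with
    | zero => rw [Nat.le_zero.mp h]
    | succ k2 ih =>
      rcases Nat.lt_or_ge k1 (k2 + 1) with h' | h'
      · exact (ih (by omega)).trans (hstep k2)
      · rw [le_antisymm h h']
  have hYuniv : closure (⋃ k, f^[k * m] '' B) = Set.univ := by
    by_contra h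
    have hne : (closure (⋃ k, f^[k * m] '' B))ᶜ.Nonempty := Set.nonempty_compl.mpr h
    obtain ⟨k, z, ⟨x, hxS, rfl⟩, hz⟩ :=
      mult_hit hf hwm hs hm hS isClosed_closure.isOpen_compl hSne hne
    exact hz (subset_closure (Set.mem_iUnion.mpr ⟨k, ⟨x, hSB hxS, rfl⟩⟩))
  obtain ⟨v, hv⟩ := hVne
  have hvcl : v ∈ closure (⋃ k, f^[k * m] '' B) := hYuniv ▸ Set.mem_univ v
  rw [mem_closure_iff] at hvcl
  obtain ⟨z, hzV, hzU⟩ := hvcl V hV hv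
  obtain ⟨k0, hk0⟩ := Set.mem_iUnion.mp hzU
  refine ⟨k0, fun k hk => ?_⟩
  obtain ⟨x, hxB, hxz⟩ := hmono k0 k hk hk0
  -- x ∈ B, f^[k*m] x = z ∈ V ; convert witness into S
  have hxcl : x ∈ closure S := hBcl hxB
  rw [mem_closure_iff] at hxcl
  obtain ⟨y, hyV, hyS⟩ := hxcl (f^[k * m] ⁻¹' V) (hV.preimage (hf.iterate _))
    (by rw [Set.mem_preimage, hxz]; exact hzV)
  exact ⟨f^[k * m] y, ⟨y, hyS, rfl⟩, hyV⟩

lemma cof_arc (hf : Continuous f) (hwm : WeaklyMixing f) (hs : Function.Surjective f)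
    [Nonempty X] {S B : Set X} (hS : IsOpen S) (hSne : S.Nonempty) (hSB : S ⊆ B)
    (hBcl : B ⊆ closure S) {m : ℕ} (hm : 1 ≤ m) (hcov : B ⊆ f^[m] '' B)
    {V : Set X} (hV : IsOpen V) (hVne : V.Nonempty) :
    ∃ N, ∀ n ≥ N, (f^[n] '' S ∩ V).Nonempty := by
  have H : ∀ r : ℕ, ∃ k0, ∀ k ≥ k0, (f^[k * m] '' S ∩ f^[r] ⁻¹' V).Nonempty := by
    intro r
    refine density hf hwm hs hS hSne hSB hBcl hm hcov (hV.preimage (hf.iterate r)) ?_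
    obtain ⟨v, hv⟩ := hVne
    obtain ⟨x, hx⟩ := (hs.iterate r) v
    exact ⟨x, by simp [Set.mem_preimage, hx, hv]⟩
  choose K hK using H
  refine ⟨m * ((Finset.range m).sup K + 1), fun n hn => ?_⟩
  set r := n % m with hrdef
  set k := n / m with hkdef
  have hrm : r < m := Nat.mod_lt _ hm
  have hkge : K r ≤ k := by
    have h1 : K r ≤ (Finset.range m).sup K := Finset.le_sup (Finset.mem_range.mpr hrm)
    have h2 : (Finset.range m).sup K + 1 ≤ k := by
      rw [hkdef, Nat.le_div_iff_mul_le hm]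
      calc ((Finset.range m).sup K + 1) * m = m * ((Finset.range m).sup K + 1) := Nat.mul_comm _ _
      _ ≤ n := hn
    omega
  obtain ⟨z, ⟨x, hxS, rfl⟩, hzV⟩ := hK r k hkge
  have hn' : n = r + k * m := by
    rw [hrdef, hkdef, Nat.mul_comm]
    exact (Nat.mod_add_div n m).symm
  refine ⟨f^[n] x, ⟨x, hxS, rfl⟩, ?_⟩
  rw [hn', Function.iterate_add_apply]
  exact hzV

end Dynamics

end Wm

theorem stmt_11 {X : Type*} [MetricSpace X] [CompactSpace X]
    (hX : HasFreeInterval X)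
    (f : X → X) (hf : Continuous f) (hwm : WeaklyMixing f) :
    TopMixing f := by
  classical
  obtain ⟨J, hJ, ⟨e⟩⟩ := hX
  set ι : ↥(Set.Ioo (0:ℝ) 1) → X := fun p => (e.symm p : X) with hι
  have hc : Continuous ι := continuous_subtype_val.comp e.symm.continuous
  have hi : Function.Injective ι := Subtype.val_injective.comp e.symm.injective
  have ho : IsOpenMap ι := (hJ.isOpenMap_subtype_val).comp e.symm.isOpenMap
  haveI : Nonempty X := ⟨ι ⟨1/2, by norm_num⟩⟩
  have hs : Function.Surjective f := Wm.surj_of_wm hf hwm hi ho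
  have hss := fun i => Wm.sigma_step (f := f) hf hwm hc hi ho i
  choose mf σ hmf hσ using hss
  have hσ' : ∀ i, 1 ≤ mf i ∧ Wm.Bc ι (σ i) ⊆ f^[mf i] '' Wm.Bc ι i := fun i => ⟨hmf i, hσ i⟩
  intro U V hU hV hUne hVne
  -- step 1: find a closed arc that is sent into U after k1 steps
  obtain ⟨k1, hk1⟩ := Wm.nn_nonempty hwm (Wm.isOpen_arcO ho 0 1) hU
      (Wm.arcO_nonempty le_rfl le_rfl one_pos) hUne
  set W : Set X := Wm.arcO ι 0 1 ∩ f^[k1] ⁻¹' U with hWdef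
  have hWopen : IsOpen W := (Wm.isOpen_arcO ho 0 1).inter (hU.preimage (hf.iterate k1))
  obtain ⟨y0, ⟨x0, hx0arc, rfl⟩, hx0U⟩ := hk1
  obtain ⟨p0, hp0, rfl⟩ := hx0arc
  have hx0W : ι p0 ∈ W := ⟨⟨p0, hp0, rfl⟩, hx0U⟩
  have hQ : IsOpen (Subtype.val '' (ι ⁻¹' W) : Set ℝ) :=
    isOpen_Ioo.isOpenMap_subtype_val _ (hWopen.preimage hc)
  have ht0 : (p0 : ℝ) ∈ Subtype.val '' (ι ⁻¹' W) := ⟨p0, hx0W, rfl⟩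
  obtain ⟨ε, hε, hball⟩ := Metric.isOpen_iff.mp hQ _ ht0
  set α := (p0:ℝ) - ε/2 with hαdef
  set β := (p0:ℝ) + ε/2 with hβdef
  have hαβ : α < β := by rw [hαdef, hβdef]; linarith
  have hIccQ : Set.Icc α β ⊆ Subtype.val '' (ι ⁻¹' W) := by
    intro z hz
    apply hball
    rw [Metric.mem_ball, Real.dist_eq, abs_lt]
    rw [hαdef] at hz
    constructor
    · have := hz.1; linarith
    · have := hz.2; rw [hβdef] at this; linarith
  have hIccIoo : Set.Icc α β ⊆ Set.Ioo (0:ℝ) 1 := by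
    intro z hz
    obtain ⟨q, hqW, hval⟩ := hIccQ hz
    rw [← hval]; exact q.2
  have hACW : Wm.arcC ι α β ⊆ W := by
    rintro z ⟨r, hr, rfl⟩
    obtain ⟨q, hqW, hval⟩ := hIccQ hr
    rwa [show r = q from Subtype.ext hval.symm]
  have hα0 : 0 < α := (hIccIoo ⟨le_rfl, le_of_lt hαβ⟩).1
  have hβ1 : β < 1 := (hIccIoo ⟨le_of_lt hαβ, le_rfl⟩).2
  have hAone : (Wm.arcO ι α β).Nonempty :=
    Wm.arcO_nonempty (le_of_lt hα0) (le_of_lt hβ1) hαβ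
  -- step 2: the arc reaches both windows simultaneously
  obtain ⟨n2, hn2⟩ := Wm.list_trans hf hwm
      [(Wm.arcO ι α β, Wm.WL ι), (Wm.arcO ι α β, Wm.WR ι)] (by
    rintro p hp
    rcases List.mem_pair.mp hp with rfl | rfl
    · exact ⟨Wm.isOpen_arcO ho _ _, Wm.WL_open ho, hAone, Wm.WL_ne⟩
    · exact ⟨Wm.isOpen_arcO ho _ _, Wm.WR_open ho, hAone, Wm.WR_ne⟩)
  have hA1 := hn2 (Wm.arcO ι α β, Wm.WL ι) (by simp)
  have hA2 := hn2 (Wm.arcO ι α β, Wm.WR ι) (by simp)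
  have hpre : IsPreconnected (f^[n2] '' Wm.arcC ι α β) :=
    (Wm.isPreconnected_arcC hc hIccIoo).image _ (hf.iterate n2).continuousOn
  have hL : ((f^[n2] '' Wm.arcC ι α β) ∩ Wm.WL ι).Nonempty := by
    obtain ⟨y, ⟨x, hx, rfl⟩, hyW⟩ := hA1
    exact ⟨f^[n2] x, ⟨x, Wm.arcO_subset_arcC _ _ hx, rfl⟩, hyW⟩
  have hR : ((f^[n2] '' Wm.arcC ι α β) ∩ Wm.WR ι).Nonempty := by
    obtain ⟨y, ⟨x, hx, rfl⟩, hyW⟩ := hA2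
    exact ⟨f^[n2] x, ⟨x, Wm.arcO_subset_arcC _ _ hx, rfl⟩, hyW⟩
  obtain ⟨j0, hj0⟩ := Wm.star_lemma hc hi ho hpre hL hR
  -- step 3: periodic basic arc reachable from j0
  obtain ⟨a, k, hk1', hper⟩ := Wm.periodic σ j0
  obtain ⟨cc, -, hreach⟩ := Wm.reach hσ' a j0
  obtain ⟨mm, hmmge, hcov⟩ := Wm.reach hσ' k (σ^[a] j0)
  rw [hper] at hcov
  set istar := σ^[a] j0 with histar
  have hmm1 : 1 ≤ mm := le_trans hk1' hmmge
  obtain ⟨N0, hN0⟩ := Wm.cof_arc hf hwm hs (Wm.Bo_open ho istar) (Wm.Bo_ne istar)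
      (Wm.Bo_sub istar) (Wm.Bc_sub_closure hc istar) hmm1 hcov hV hVne
  set n3 := cc + n2 with hn3
  have hchain : Wm.Bc ι istar ⊆ f^[n3] '' Wm.arcC ι α β := by
    calc Wm.Bc ι istar ⊆ f^[cc] '' Wm.Bc ι j0 := hreach
    _ ⊆ f^[cc] '' (f^[n2] '' Wm.arcC ι α β) := Set.image_mono hj0
    _ = f^[n3] '' Wm.arcC ι α β := by rw [hn3, Function.iterate_add f, Set.image_comp]
  refine ⟨N0 + n3 + k1, fun t ht => ?_⟩
  set n := t + k1 - n3 with hndef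
  have hnge : N0 ≤ n := by omega
  have hsum : n + n3 = t + k1 := by omega
  obtain ⟨y, ⟨xb, hxb, rfl⟩, hyV⟩ := hN0 n hnge
  obtain ⟨z, hz, hz2⟩ := hchain (Wm.Bo_sub istar hxb)
  have hzW : z ∈ W := hACW hz
  refine ⟨f^[t] (f^[k1] z), ⟨f^[k1] z, hzW.2, rfl⟩, ?_⟩
  have heq : f^[t] (f^[k1] z) = f^[n] xb := by
    rw [← Function.iterate_add_apply f t k1 z, ← hsum,
      Function.iterate_add_apply f n n3 z, hz2]
  rw [heq]; exact hyV
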